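/- arXiv:2204.00365 — 3 statements merged into one kernel-verified Lean document; each statement's English description precedes it below -/
import Mathlib

section
/- For every w ∈ ℂ with Im w > 0, one has |tan w − i| ≤ 2·exp(−2·Im w) / (1 − exp(−2·Im w)). -/
open Complex Real

/-- Quantitative convergence of tan to i in the upper half-plane. -/
theorem stmt_8 (w : ℂ) (h : 0 < w.im) :
    ‖Complex.tan w - Complex.I‖ ≤
      2 * Real.exp (-2 * w.im) / (1 - Real.exp (-2 * w.im)) := by
  set q : ℝ := Real.exp (-2 * w.im) with hqdef
  have hq1 : q < 1 := by
    rw [hqdef]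
    have : (-2 : ℝ) * w.im < 0 := by nlinarith
    simpa using Real.exp_lt_one_iff.mpr this
  have hq0 : 0 < q := Real.exp_pos _
  set z : ℂ := Complex.exp (2 * (w * Complex.I)) with hzdef
  have habs : ‖z‖ = q := by
    rw [hzdef, Complex.norm_exp, hqdef]
    congr 1
    simp [Complex.mul_re, Complex.mul_im]
  have hz1 : z + 1 ≠ 0 := by
    intro hc
    have : z = -1 := by linear_combination hc
    rw [this] at habs
    simp at habs
    rw [← habs] at hq1
    simp at hq1
  have he : Complex.exp (w * Complex.I) ≠ 0 := Complex.exp_ne_zero _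
  have hz : z = Complex.exp (w * Complex.I) * Complex.exp (w * Complex.I) := by
    rw [← Complex.exp_add, hzdef]; ring_nf
  have hneg : Complex.exp (-w * Complex.I) = (Complex.exp (w * Complex.I))⁻¹ := by
    rw [neg_mul, Complex.exp_neg]
  have hcos : Complex.cos w ≠ 0 := by
    rw [Complex.cos, hneg]
    intro hc
    apply hz1
    rw [hz]
    field_simp at hc
    linear_combination hc
  have key : Complex.tan w - Complex.I = -2 * Complex.I * z / (z + 1) := by
    have h1z : (1 : ℂ) + Complex.exp (w * Complex.I) ^ 2 ≠ 0 := by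
      intro hc
      apply hz1
      rw [hz]
      linear_combination hc
    have h1z' : Complex.exp (w * Complex.I) * Complex.exp (w * Complex.I) + 1 ≠ 0 := by
      rw [← hz]; exact hz1
    rw [Complex.tan_eq_sin_div_cos, Complex.sin, Complex.cos, hneg, hz,
      eq_div_iff h1z']
    field_simp
    rw [mul_sub, mul_div_cancel₀ _ (by rw [add_comm]; exact h1z)]
    ring
  rw [key]
  have habs2 : ‖-2 * Complex.I * z / (z + 1)‖ =
      2 * q / ‖z + 1‖ := by
    rw [norm_div, norm_mul, norm_mul, habs]
    simp
  rw [habs2]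
  have hlow : 1 - q ≤ ‖z + 1‖ := by
    calc 1 - q = ‖(1 : ℂ)‖ - ‖z‖ := by simp [habs]
    _ ≤ ‖1 + z‖ := by
        have h1 : ‖(1 : ℂ)‖ ≤ ‖1 + z‖ + ‖z‖ := by
          calc ‖(1 : ℂ)‖ = ‖(1 + z) + -z‖ := by ring_nf
          _ ≤ ‖1 + z‖ + ‖-z‖ := norm_add_le _ _
          _ = ‖1 + z‖ + ‖z‖ := by simp
        linarith
    _ = ‖z + 1‖ := by rw [add_comm]
  have hpos : 0 < 1 - q := by linarith
  gcongr
end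

section
/- For every real λ with |λ| < 1/5, there exists α ∈ ℝ such that λ + tan(α²) = α, |2α(1 + tan(α²)²)| < 1 (so α is an attracting fixed point of the map x ↦ λ + tan(x²) on ℝ), and the orbit of the origin converges to α: the iterates (x ↦ λ + tan(x²))^[n](0) tend to α as n → ∞. -/
open Real Filter

namespace Stmt10Aux

noncomputable def S : Set ℝ := Set.Icc (-(3/10)) (3/10)

lemma sq_mem {x : ℝ} (hx : x ∈ S) : x ^ 2 ≤ 9/100 := by
  obtain ⟨h1, h2⟩ := hx
  nlinarith

lemma cos_ge {x : ℝ} (hx : x ∈ S) : (99/100 : ℝ) ≤ Real.cos (x ^ 2) := by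
  have h := Real.one_sub_sq_div_two_le_cos (x := x ^ 2)
  have h2 := sq_mem hx
  nlinarith [sq_nonneg x, sq_nonneg (x^2)]

lemma tan_nonneg {x : ℝ} (hx : x ∈ S) : 0 ≤ Real.tan (x ^ 2) := by
  rw [Real.tan_eq_sin_div_cos]
  have hc : (0:ℝ) < Real.cos (x ^ 2) := lt_of_lt_of_le (by norm_num) (cos_ge hx)
  have hs : 0 ≤ Real.sin (x ^ 2) := by
    apply Real.sin_nonneg_of_nonneg_of_le_pi (sq_nonneg x)
    have := sq_mem hx
    nlinarith [Real.pi_gt_three]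
  positivity

lemma tan_le {x : ℝ} (hx : x ∈ S) : Real.tan (x ^ 2) ≤ 1/10 := by
  rw [Real.tan_eq_sin_div_cos]
  have hc : (99/100:ℝ) ≤ Real.cos (x ^ 2) := cos_ge hx
  have hc0 : (0:ℝ) < Real.cos (x ^ 2) := lt_of_lt_of_le (by norm_num) hc
  have hs : Real.sin (x ^ 2) ≤ 9/100 := (Real.sin_le (sq_nonneg x)).trans (sq_mem hx)
  rw [div_le_iff₀ hc0]
  nlinarith

end Stmt10Aux

open Stmt10Aux in
/-- For real |λ| < 1/5 the map x ↦ λ + tan(x²) has an attracting fixed point α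
    attracting the orbit of the origin. -/
theorem stmt_10 (l : ℝ) (hl : |l| < 1 / 5) :
    ∃ α : ℝ, l + Real.tan (α ^ 2) = α ∧
      |2 * α * (1 + Real.tan (α ^ 2) ^ 2)| < 1 ∧
      Tendsto (fun n : ℕ => (fun x : ℝ => l + Real.tan (x ^ 2))^[n] 0)
        atTop (nhds α) := by
  obtain ⟨hl1, hl2⟩ := abs_lt.mp hl
  set f : ℝ → ℝ := fun x => l + Real.tan (x ^ 2) with hf
  -- f maps S to S
  have hmaps : Set.MapsTo f S S := by
    intro x hx
    have h1 := tan_nonneg hx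
    have h2 := tan_le hx
    constructor <;> simp only [hf] <;> linarith
  -- Lipschitz with constant 7/10
  have hlip : LipschitzOnWith (7/10 : NNReal) f S := by
    apply Convex.lipschitzOnWith_of_nnnorm_hasDerivWithin_le
      (f' := fun x => 1 / Real.cos (x ^ 2) ^ 2 * (2 * x)) (convex_Icc _ _)
    · intro x hx
      have hc0 : Real.cos (x ^ 2) ≠ 0 := by
        have := cos_ge hx; intro h; rw [h] at this; norm_num at this
      have h1 : HasDerivAt (fun y : ℝ => y ^ 2) (2 * x) x := by
        simpa using hasDerivAt_pow 2 x
      have h2 : HasDerivAt Real.tan (1 / Real.cos (x ^ 2) ^ 2) (x ^ 2) :=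
        Real.hasDerivAt_tan hc0
      have h3 : HasDerivAt (Real.tan ∘ fun y : ℝ => y ^ 2)
          (1 / Real.cos (x ^ 2) ^ 2 * (2 * x)) x :=
        HasDerivAt.comp (h₂ := Real.tan) (h₂' := 1 / Real.cos (x ^ 2) ^ 2)
          (h := fun y : ℝ => y ^ 2) (h' := 2 * x) (x := x) h2 h1
      exact (h3.const_add l).hasDerivWithinAt
    · intro x hx
      rw [← NNReal.coe_le_coe, coe_nnnorm, Real.norm_eq_abs]
      have hc : (99/100:ℝ) ≤ Real.cos (x ^ 2) := cos_ge hx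
      have hc0 : (0:ℝ) < Real.cos (x ^ 2) := lt_of_lt_of_le (by norm_num) hc
      have hxb : |2 * x| ≤ 3/5 := by
        rw [abs_le]; obtain ⟨h1, h2⟩ := hx; constructor <;> linarith
      have hsec : 1 / Real.cos (x ^ 2) ^ 2 ≤ 10000/9801 := by
        rw [div_le_div_iff₀ (by positivity) (by norm_num)]
        nlinarith
      have hsec0 : 0 ≤ 1 / Real.cos (x ^ 2) ^ 2 := by positivity
      calc |1 / Real.cos (x ^ 2) ^ 2 * (2 * x)|
          = 1 / Real.cos (x ^ 2) ^ 2 * |2 * x| := by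
            rw [abs_mul, abs_of_nonneg hsec0]
        _ ≤ 10000/9801 * (3/5) := by
            apply mul_le_mul hsec hxb (abs_nonneg _) (by norm_num)
        _ ≤ ((7/10 : NNReal) : ℝ) := by norm_num
  haveI : CompleteSpace S := IsClosed.completeSpace_coe (hs := isClosed_Icc)
  haveI : Nonempty S := ⟨⟨0, by constructor <;> norm_num⟩⟩
  have hcontr : ContractingWith (7/10 : NNReal) (hmaps.restrict f S S) := by
    refine ⟨?_, hlip.mapsToRestrict hmaps⟩
    rw [← NNReal.coe_lt_coe]; norm_num
  set α₀ := ContractingWith.fixedPoint (hmaps.restrict f S S) hcontr with hα₀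
  refine ⟨(α₀ : ℝ), ?_, ?_, ?_⟩
  · exact congrArg Subtype.val hcontr.fixedPoint_isFixedPt
  · have hmem : (α₀ : ℝ) ∈ S := α₀.2
    have h1 := tan_nonneg hmem
    have h2 := tan_le hmem
    have hb : |2 * (α₀:ℝ)| ≤ 3/5 := by
      rw [abs_le]; obtain ⟨ha, hb⟩ := hmem; constructor <;> linarith
    have hpos : 0 < 1 + Real.tan ((α₀:ℝ) ^ 2) ^ 2 := by positivity
    calc |2 * (α₀:ℝ) * (1 + Real.tan ((α₀:ℝ) ^ 2) ^ 2)|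
        = |2 * (α₀:ℝ)| * (1 + Real.tan ((α₀:ℝ) ^ 2) ^ 2) := by
          rw [abs_mul, abs_of_pos hpos]
      _ ≤ (3/5) * (1 + (1/10)^2) := by
          apply mul_le_mul hb _ hpos.le (by norm_num)
          nlinarith
      _ < 1 := by norm_num
  · have ht := hcontr.tendsto_iterate_fixedPoint ⟨0, by constructor <;> norm_num⟩
    have := (continuous_subtype_val.tendsto α₀).comp ht
    simp only [Function.comp_def, Set.MapsTo.coe_iterate_restrict] at this
    exact this
end

section
/- There exists T > 0 such that for every λ ∈ ℂ with Re λ ≥ 1, Im λ ≥ 1 and (Re λ)·(Im λ) > T, there exists α in the closed ball of radius 1/2 centered at λ + i satisfying: λ + tan(α²) = α; |2α / (cos(α²))²| < 1 (so α is an attracting fixed point of f_λ); and the orbits under f_λ of the two singular values 0 ↦ λ and λ + i both converge to α, i.e. f_λ^[n](0) → α and f_λ^[n](λ + i) → α as n → ∞. -/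
open Complex Metric Filter

lemma cos_lb (w : ℂ) : (Real.exp w.im - Real.exp (-w.im)) / 2 ≤ ‖Complex.cos w‖ := by
  have h1 : ‖Complex.exp (w * Complex.I)‖ = Real.exp (-w.im) := by
    rw [Complex.norm_exp]; congr 1; simp [Complex.mul_re]
  have h2 : ‖Complex.exp (-w * Complex.I)‖ = Real.exp (w.im) := by
    rw [Complex.norm_exp]; congr 1; simp [Complex.mul_re]
  have key : Real.exp w.im - Real.exp (-w.im) ≤ ‖Complex.exp (w*Complex.I) + Complex.exp (-w*Complex.I)‖ := by
    have := norm_sub_norm_le (Complex.exp (-w*Complex.I)) (-Complex.exp (w*Complex.I))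
    simp only [norm_neg, sub_neg_eq_add] at this
    rw [h1, h2] at this
    simpa [add_comm] using this
  rw [Complex.cos, norm_div]
  simp only [Complex.norm_ofNat]
  linarith

lemma cos_facts (w : ℂ) (h : 1 ≤ w.im) :
    1 ≤ ‖Complex.cos w‖ ∧ Real.exp w.im / 4 ≤ ‖Complex.cos w‖ := by
  have hlb := cos_lb w
  have ha : Real.exp 1 ≤ Real.exp w.im := Real.exp_le_exp.2 h
  have he : (2.7 : ℝ) < Real.exp 1 := by
    have := Real.exp_one_gt_d9; linarith
  have hab : Real.exp w.im * Real.exp (-w.im) = 1 := by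
    rw [← Real.exp_add]; simp
  have hbpos : 0 < Real.exp (-w.im) := Real.exp_pos _
  constructor
  · nlinarith
  · nlinarith

lemma tan_sub_I (w : ℂ) (h : Complex.cos w ≠ 0) :
    Complex.tan w - Complex.I = -Complex.I * Complex.exp (w * Complex.I) / Complex.cos w := by
  rw [Complex.tan, div_sub' h]
  congr 1
  rw [Complex.sin, Complex.cos]
  field_simp
  ring

lemma tan_close (w : ℂ) (h : 1 ≤ w.im) : ‖Complex.tan w - Complex.I‖ ≤ 1/2 := by
  obtain ⟨h1, _⟩ := cos_facts w h
  have hne : Complex.cos w ≠ 0 := by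
    intro h0; rw [h0] at h1; simp at h1; linarith
  rw [tan_sub_I w hne, norm_div, norm_mul]
  have habs : ‖Complex.exp (w * Complex.I)‖ = Real.exp (-w.im) := by
    rw [Complex.norm_exp]; congr 1; simp [Complex.mul_re]
  rw [habs]
  simp only [norm_neg, Complex.norm_I, one_mul]
  have he : (2.7 : ℝ) < Real.exp 1 := by have := Real.exp_one_gt_d9; linarith
  have hsmall : Real.exp (-w.im) ≤ 1/2 := by
    have h1' : Real.exp (-w.im) ≤ Real.exp (-1) := Real.exp_le_exp.2 (by linarith)
    have h2' : Real.exp (-1) * Real.exp 1 = 1 := by rw [← Real.exp_add]; simp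
    nlinarith [Real.exp_pos (-1)]
  calc Real.exp (-w.im) / ‖Complex.cos w‖ ≤ Real.exp (-w.im) / 1 :=
        div_le_div_of_nonneg_left (Real.exp_pos _).le (by norm_num) h1
    _ ≤ 1/2 := by simpa using hsmall

/-- For λ far out in the first quadrant, f_λ has an attracting fixed point α near
    λ + i attracting the orbits of both singular values 0 (critical point, with
    value λ) and λ + i. -/
theorem stmt_14 :
    ∃ T : ℝ, 0 < T ∧ ∀ l : ℂ, 1 ≤ l.re → 1 ≤ l.im → T < l.re * l.im →
      ∃ α ∈ Metric.closedBall (l + Complex.I) (1 / 2),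
        l + Complex.tan (α ^ 2) = α ∧
        ‖2 * α / (Complex.cos (α ^ 2)) ^ 2‖ < 1 ∧
        Tendsto (fun n : ℕ => (fun z : ℂ => l + Complex.tan (z ^ 2))^[n] 0)
          atTop (nhds α) ∧
        Tendsto (fun n : ℕ => (fun z : ℂ => l + Complex.tan (z ^ 2))^[n] (l + Complex.I))
          atTop (nhds α) := by
  refine ⟨10, by norm_num, ?_⟩
  intro l hre him hT
  set P := l.re * l.im with hPdef
  have hP10 : (10:ℝ) < P := hT
  set f : ℂ → ℂ := fun z => l + Complex.tan (z^2) with hfdef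
  set B : Set ℂ := Metric.closedBall (l + Complex.I) (1/2) with hBdef
  -- basic bounds for points of B
  have hzbounds : ∀ z ∈ B, P ≤ (z^2).im ∧ ‖2*z‖ ≤ 2*P+5 := by
    intro z hz
    rw [hBdef, Metric.mem_closedBall, Complex.dist_eq] at hz
    have hre' : |(z - (l+Complex.I)).re| ≤ 1/2 := (Complex.abs_re_le_norm _).trans hz
    have him' : |(z - (l+Complex.I)).im| ≤ 1/2 := (Complex.abs_im_le_norm _).trans hz
    simp only [Complex.sub_re, Complex.sub_im, Complex.add_re, Complex.add_im,
      Complex.I_re, Complex.I_im, add_zero] at hre' him'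
    rw [abs_le] at hre' him'
    constructor
    · have h2 : (z^2).im = 2*z.re*z.im := by rw [pow_two, Complex.mul_im]; ring
      rw [h2]; nlinarith [hre'.1, him'.1, hre'.2, him'.2]
    · have h1 : ‖z‖ ≤ ‖l + Complex.I‖ + 1/2 := by
        have := dist_triangle z (l + Complex.I) 0
        simp only [Complex.dist_eq, sub_zero] at this
        linarith
      have h2 : ‖l + Complex.I‖ ≤ l.re + l.im + 1 := by
        have := Complex.norm_le_abs_re_add_abs_im (l + Complex.I)
        simp only [Complex.add_re, Complex.add_im, Complex.I_re, Complex.I_im, add_zero] at this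
        rw [_root_.abs_of_nonneg (by linarith : (0:ℝ) ≤ l.re), _root_.abs_of_nonneg (by linarith : (0:ℝ) ≤ l.im + 1)] at this
        linarith
      have h3 : l.re + l.im ≤ P + 1 := by nlinarith
      rw [norm_mul]
      simp only [Complex.norm_ofNat]
      linarith
  have hcosz : ∀ z ∈ B, (1 ≤ ‖Complex.cos (z^2)‖ ∧
      Real.exp P / 4 ≤ ‖Complex.cos (z^2)‖) ∧ Complex.cos (z^2) ≠ 0 := by
    intro z hz
    have hM := (hzbounds z hz).1
    have hM1 : 1 ≤ (z^2).im := by linarith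
    obtain ⟨c1, c2⟩ := cos_facts (z^2) hM1
    refine ⟨⟨c1, ?_⟩, fun h0 => by rw [h0] at c1; simp at c1; linarith⟩
    have : Real.exp P ≤ Real.exp ((z^2).im) := Real.exp_le_exp.2 hM
    linarith
  have hmaps : Set.MapsTo f B B := by
    intro z hz
    have hM1 : 1 ≤ (z^2).im := by linarith [(hzbounds z hz).1]
    rw [hBdef, Metric.mem_closedBall, Complex.dist_eq]
    have heq : f z - (l + Complex.I) = Complex.tan (z^2) - Complex.I := by
      rw [hfdef]; ring
    rw [heq]
    exact tan_close (z^2) hM1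
  have hderiv : ∀ z ∈ B, HasDerivAt f (2*z / Complex.cos (z^2)^2) z := by
    intro z hz
    have hc := (hcosz z hz).2
    have h1 : HasDerivAt (fun w : ℂ => w^2) (2*z) z := by
      simpa using hasDerivAt_pow 2 z
    have h2 := (Complex.hasDerivAt_tan hc).comp z h1
    have h3 := h2.const_add l
    have e : 2*z / Complex.cos (z^2)^2 = 1 / Complex.cos (z^2)^2 * (2*z) := by ring
    rw [e]; exact h3
  have hdbound : ∀ z ∈ B, ‖2*z / Complex.cos (z^2)^2‖ ≤ 1/2 := by
    intro z hz
    obtain ⟨hM, h2z⟩ := hzbounds z hz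
    have hcos := ((hcosz z hz).1).2
    rw [norm_div, norm_pow]
    rw [div_le_iff₀ (pow_pos (lt_of_lt_of_le (by positivity) hcos) 2)]
    have hcos2 : (Real.exp P / 4)^2 ≤ ‖Complex.cos (z^2)‖ ^ 2 :=
      pow_le_pow_left₀ (by positivity) hcos 2
    have hhalf : (1 + P/2) ≤ Real.exp (P/2) := by
      have := Real.add_one_le_exp (P/2); linarith
    have hexp : (1 + P/2)^4 ≤ Real.exp P ^ 2 := by
      have h4 : Real.exp (P/2) ^ 4 = Real.exp P ^ 2 := by
        rw [← Real.exp_nat_mul, ← Real.exp_nat_mul]; norm_num; ring_nf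
      rw [← h4]
      exact pow_le_pow_left₀ (by linarith) hhalf 4
    nlinarith [hcos2, hexp, sq_nonneg (P - 10), sq_nonneg P]
  have hlip : ∀ x ∈ B, ∀ y ∈ B, dist (f x) (f y) ≤ (1/2) * dist x y := by
    intro x hx y hy
    have hconv : Convex ℝ B := convex_closedBall _ _
    have := hconv.norm_image_sub_le_of_norm_hasDerivWithin_le
      (fun z hz => (hderiv z hz).hasDerivWithinAt)
      (fun z hz => by simpa using hdbound z hz) hy hx
    simpa [dist_eq_norm] using this
  have hBc : IsClosed B := isClosed_closedBall
  haveI := hBc.completeSpace_coe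
  haveI : Nonempty B := ⟨⟨l + Complex.I, mem_closedBall_self (by norm_num)⟩⟩
  set g : B → B := fun x => ⟨f x, hmaps x.2⟩ with hgdef
  have hcontr : ContractingWith (1/2 : NNReal) g := by
    constructor
    · rw [← NNReal.coe_lt_coe]; norm_num
    · apply LipschitzWith.of_dist_le_mul
      intro x y
      have := hlip x x.2 y y.2
      simpa [Subtype.dist_eq, hgdef] using this
  set x₀ : B := ContractingWith.fixedPoint g hcontr with hx₀
  have hfix : f (x₀ : ℂ) = (x₀ : ℂ) := congrArg Subtype.val (hcontr.fixedPoint_isFixedPt)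
  have hiter : ∀ (b : B) (n : ℕ), f^[n] (b : ℂ) = ((g^[n] b : B) : ℂ) := by
    intro b n
    induction n with
    | zero => rfl
    | succ n ih => rw [Function.iterate_succ_apply', Function.iterate_succ_apply', ih]
  have htend : ∀ b : B, Tendsto (fun n => f^[n] (b : ℂ)) atTop (nhds (x₀ : ℂ)) := by
    intro b
    have h1 := hcontr.tendsto_iterate_fixedPoint b
    have h2 := (continuous_subtype_val.tendsto x₀).comp h1
    exact h2.congr fun n => (hiter b n).symm
  refine ⟨(x₀ : ℂ), x₀.2, hfix, ?_, ?_, ?_⟩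
  · have := hdbound (x₀ : ℂ) x₀.2
    calc ‖2 * (x₀:ℂ) / Complex.cos ((x₀:ℂ)^2)^2‖ ≤ 1/2 := this
      _ < 1 := by norm_num
  · -- orbit of 0
    have h0 : f 0 = l := by simp [hfdef]
    have hfl : f l ∈ B := by
      have hl2 : 1 ≤ ((l:ℂ)^2).im := by
        have : ((l:ℂ)^2).im = 2*l.re*l.im := by rw [pow_two, Complex.mul_im]; ring
        rw [this]; nlinarith
      rw [hBdef, Metric.mem_closedBall, Complex.dist_eq]
      have heq : f l - (l + Complex.I) = Complex.tan (l^2) - Complex.I := by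
        rw [hfdef]; ring
      rw [heq]
      exact tan_close (l^2) hl2
    have key := htend ⟨f l, hfl⟩
    have hshift : ∀ n, f^[n+2] 0 = f^[n] (f l) := by
      intro n
      rw [Function.iterate_add_apply]
      congr 1
      show f (f 0) = f l
      rw [h0]
    exact (tendsto_add_atTop_iff_nat 2).mp (key.congr fun n => (hshift n).symm)
  · exact htend ⟨l + Complex.I, mem_closedBall_self (by norm_num)⟩
end
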